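/- For the complete multipartite graph K_{n_1,…,n_{k−1},1} with n_1 ≥ … ≥ n_{k−1} ≥ n_k = 1 and N = n_1+…+n_{k−1}+1, the radial spanning tree rooted at the unique vertex of the singleton part minimizes the L^p congestion simultaneously for all p, and C_p(K_{n_1,…,n_{k−1},1}) = (Σ_{i=1}^{k−1} n_i (N − n_i)^p)^{1/p}. -/

import Mathlib

open Classical

noncomputable section CongestionDefs

variable {V : Type*} [Fintype V] [DecidableEq V]

/-- Weighted congestion of an edge `e` of a spanning tree `T` of `G`: total weight of
edges of `G` whose endpoints are separated in `T` with `e` removed. -/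
def edgeCongestion (G T : SimpleGraph V) (ω : Sym2 V → ℝ) (e : Sym2 V) : ℝ :=
  ∑ f : Sym2 V,
    if f ∈ G.edgeSet ∧ ∃ a b : V, f = s(a, b) ∧ ¬ (T.deleteEdges {e}).Reachable a b
    then ω f else 0

/-- The `L^p` congestion of a spanning tree `T` (for a natural `p ≥ 1`). -/
def treeCong (G T : SimpleGraph V) (ω : Sym2 V → ℝ) (p : ℕ) : ℝ :=
  (∑ e : Sym2 V, if e ∈ T.edgeSet then (edgeCongestion G T ω e) ^ p else 0) ^ ((1 : ℝ) / p)

/-- The `L^∞` congestion of a spanning tree `T`. -/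
def treeCongTop (G T : SimpleGraph V) (ω : Sym2 V → ℝ) : ℝ :=
  ⨆ e ∈ T.edgeSet, edgeCongestion G T ω e

/-- `T` is a spanning tree of `G`. -/
def IsSpanningTree (G T : SimpleGraph V) : Prop := T ≤ G ∧ T.IsTree

/-- The `L^p` spanning tree congestion of `(G, ω)`. -/
def graphCong (G : SimpleGraph V) (ω : Sym2 V → ℝ) (p : ℕ) : ℝ :=
  sInf {x | ∃ T : SimpleGraph V, IsSpanningTree G T ∧ treeCong G T ω p = x}

/-- The `L^∞` spanning tree congestion of `(G, ω)`. -/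
def graphCongTop (G : SimpleGraph V) (ω : Sym2 V → ℝ) : ℝ :=
  sInf {x | ∃ T : SimpleGraph V, IsSpanningTree G T ∧ treeCongTop G T ω = x}

/-- Total weight of (the edges of) a graph. -/
def totalWeight (T : SimpleGraph V) (ρ : Sym2 V → ℝ) : ℝ :=
  ∑ e : Sym2 V, if e ∈ T.edgeSet then ρ e else 0

end CongestionDefs

/-- The star graph centered at `v`: `v` is joined to every other vertex. -/
def starGraph {V : Type*} (v : V) : SimpleGraph V where
  Adj a b := a ≠ b ∧ (a = v ∨ b = v)
  symm := by
    constructor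
    intro a b h
    exact ⟨h.1.symm, h.2.symm⟩
  loopless := by
    constructor
    intro a h
    exact h.1 rfl

section Helpers

open Finset SimpleGraph

variable {V : Type*} [Fintype V] [DecidableEq V]

lemma myNotReachOfIso {G : SimpleGraph V} {u w : V} (hne : u ≠ w)
    (hiso : ∀ z, ¬ G.Adj u z) : ¬ G.Reachable u w := by
  intro hr
  obtain ⟨p⟩ := hr
  cases p with
  | nil => exact hne rfl
  | cons ha _ => exact hiso _ ha

lemma myStarIso (v0 u : V) (hu : u ≠ v0) (z : V) :
    ¬ ((_root_.starGraph v0).deleteEdges {s(v0, u)}).Adj u z := by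
  intro hz
  rw [SimpleGraph.deleteEdges_adj] at hz
  obtain ⟨hadj, hmem⟩ := hz
  have h1 : u ≠ z ∧ (u = v0 ∨ z = v0) := hadj
  rcases h1.2 with h | h
  · exact hu h
  · subst h
    exact hmem (by rw [Sym2.eq_swap]; rfl)

lemma myStarTree (v0 : V) : (_root_.starGraph v0).IsTree := by
  have hreach : ∀ x : V, (_root_.starGraph v0).Reachable x v0 := by
    intro x
    by_cases h : x = v0
    · subst h; exact SimpleGraph.Reachable.refl _
    · exact SimpleGraph.Adj.reachable ⟨h, Or.inr rfl⟩
  haveI : Nonempty V := ⟨v0⟩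
  constructor
  · exact ⟨fun a b => (hreach a).trans (hreach b).symm⟩
  · rw [SimpleGraph.isAcyclic_iff_forall_adj_isBridge]
    intro a b hab
    have hab' : a ≠ b ∧ (a = v0 ∨ b = v0) := hab
    rw [SimpleGraph.isBridge_iff]
    have key : ∀ u : V, u ≠ v0 →
        ¬ ((_root_.starGraph v0).deleteEdges {s(v0,u)}).Reachable u v0 :=
      fun u hu => myNotReachOfIso hu (myStarIso v0 u hu)
    rcases hab'.2 with h | h
    · subst h
      intro hr
      exact key b (fun hb => hab'.1 hb.symm) hr.symm
    · subst h
      intro hr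
      rw [show s(a, b) = s(b, a) from Sym2.eq_swap] at hr
      exact key a hab'.1 hr

lemma myExistsParent {T : SimpleGraph V} (hT : T.IsTree) {v0 u : V} (h : u ≠ v0) :
    ∃ w, T.Adj u w ∧ T.dist v0 w < T.dist v0 u ∧
      ¬ (T.deleteEdges {s(u, w)}).Reachable v0 u := by
  have hr : T.Reachable u v0 := hT.isConnected.preconnected u v0
  obtain ⟨W, hWlen⟩ := hr.exists_walk_length_eq_dist
  cases W with
  | nil => exact absurd rfl h
  | @cons _ w _ ha q =>
    have hlen : q.length + 1 = T.dist u v0 := by simpa using hWlen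
    have hd1 : T.dist v0 w ≤ q.length := by
      rw [SimpleGraph.dist_comm]; exact SimpleGraph.dist_le q
    have hd2 : T.dist v0 u = q.length + 1 := by
      rw [SimpleGraph.dist_comm]; omega
    refine ⟨w, ha, by omega, ?_⟩
    intro hre
    have hbridge : ¬ (T.deleteEdges {s(u,w)}).Reachable u w := by
      have hb := (SimpleGraph.isAcyclic_iff_forall_adj_isBridge.mp hT.IsAcyclic) ha
      rw [SimpleGraph.isBridge_iff] at hb
      exact hb
    have hrw : T.Reachable v0 w := hT.isConnected.preconnected v0 w
    obtain ⟨S, hS⟩ := hrw.exists_walk_length_eq_dist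
    have husup : u ∉ S.support := by
      intro hu
      have h1 : T.dist v0 u ≤ (S.takeUntil u hu).length := SimpleGraph.dist_le _
      have h2 : (S.takeUntil u hu).length ≤ S.length :=
        SimpleGraph.Walk.length_takeUntil_le S hu
      omega
    have hedge : ∀ f ∈ S.edges, f ∉ ({s(u,w)} : Set (Sym2 V)) := by
      intro f hf hfe
      rw [Set.mem_singleton_iff] at hfe
      subst hfe
      exact husup (S.fst_mem_support_of_mem_edges hf)
    exact hbridge (hre.symm.trans ⟨S.toDeleteEdges _ hedge⟩)

lemma myFilterPartCard {k : ℕ} (n : Fin k → ℕ) (j : Fin k) :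
    ((Finset.univ : Finset (Σ i : Fin k, Fin (n i))).filter (fun z => z.1 = j)).card = n j := by
  have himg : (Finset.univ : Finset (Σ i : Fin k, Fin (n i))).filter (fun z => z.1 = j)
      = Finset.univ.image (fun t : Fin (n j) => (⟨j, t⟩ : Σ i, Fin (n i))) := by
    ext z
    simp only [Finset.mem_filter, Finset.mem_univ, true_and, Finset.mem_image]
    constructor
    · intro h
      obtain ⟨i, t⟩ := z
      dsimp at h
      subst h
      exact ⟨t, rfl⟩
    · rintro ⟨t, rfl⟩
      rfl
  rw [himg, Finset.card_image_of_injective _ (fun t t' h => by simpa using h)]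
  simp

lemma mySigmaEq {k : ℕ} {n : Fin k → ℕ} (x y : Σ i : Fin k, Fin (n i))
    (h1 : x.1 = y.1) (h2 : n y.1 = 1) : x = y := by
  obtain ⟨i, t⟩ := x
  obtain ⟨j, s⟩ := y
  dsimp at h1 h2
  subst h1
  have ht := t.isLt
  have hs := s.isLt
  exact congrArg _ (Fin.ext (show (t:ℕ) = s by omega))

lemma myCongNonneg (G T : SimpleGraph V) (e : Sym2 V) :
    0 ≤ edgeCongestion G T (fun _ => 1) e := by
  apply Finset.sum_nonneg
  intro f _
  split_ifs <;> norm_num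

lemma myCardLeCong (G T : SimpleGraph V) (e : Sym2 V) (D : Finset (Sym2 V))
    (hD : ∀ f ∈ D, f ∈ G.edgeSet ∧ ∃ a b : V, f = s(a, b) ∧
      ¬ (T.deleteEdges {e}).Reachable a b) :
    (D.card : ℝ) ≤ edgeCongestion G T (fun _ => 1) e := by
  unfold edgeCongestion
  calc (D.card : ℝ) = ∑ _f ∈ D, (1:ℝ) := by simp
  _ = ∑ f ∈ D, (if f ∈ G.edgeSet ∧ ∃ a b : V, f = s(a,b) ∧
        ¬ (T.deleteEdges {e}).Reachable a b then (1:ℝ) else 0) := by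
      refine Finset.sum_congr rfl fun f hf => ?_
      rw [if_pos (hD f hf)]
  _ ≤ _ := Finset.sum_le_sum_of_subset_of_nonneg (Finset.subset_univ D)
      (fun f _ _ => by split_ifs <;> norm_num)

lemma myCongEqCard (G T : SimpleGraph V) (e : Sym2 V) (D : Finset (Sym2 V))
    (hD : ∀ f : Sym2 V, (f ∈ G.edgeSet ∧ ∃ a b : V, f = s(a,b) ∧
      ¬ (T.deleteEdges {e}).Reachable a b) ↔ f ∈ D) :
    edgeCongestion G T (fun _ => 1) e = D.card := by
  unfold edgeCongestion
  rw [Finset.sum_congr rfl (fun f _ => if_congr (hD f) rfl rfl)]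
  simp

end Helpers

section Multi

open Finset SimpleGraph

variable {k : ℕ} {n : Fin k → ℕ}

lemma myAdjIff (a b : Σ i : Fin k, Fin (n i)) :
    (SimpleGraph.completeMultipartiteGraph (fun i : Fin k => Fin (n i))).Adj a b ↔ a.1 ≠ b.1 := by
  simp [SimpleGraph.comap_adj, SimpleGraph.top_adj]

lemma myCongLower (v0 : Σ i : Fin k, Fin (n i))
    (hs : ∀ x : Σ i : Fin k, Fin (n i), x.1 = v0.1 → x = v0)
    (T : SimpleGraph (Σ i : Fin k, Fin (n i))) (e : Sym2 (Σ i : Fin k, Fin (n i)))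
    (u : Σ i : Fin k, Fin (n i)) (hu : u ≠ v0)
    (hA : ¬ (T.deleteEdges {e}).Reachable v0 u) :
    ((Fintype.card (Σ i : Fin k, Fin (n i)) - n u.1 : ℕ) : ℝ)
      ≤ edgeCongestion (SimpleGraph.completeMultipartiteGraph (fun i : Fin k => Fin (n i)))
          T (fun _ => 1) e := by
  classical
  set G := SimpleGraph.completeMultipartiteGraph (fun i : Fin k => Fin (n i)) with hG
  set T' := T.deleteEdges {e} with hT'
  set A := Finset.univ.filter (fun z : Σ i : Fin k, Fin (n i) => ¬ T'.Reachable v0 z) with hAdef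
  set B := Finset.univ.filter (fun z : Σ i : Fin k, Fin (n i) => T'.Reachable v0 z) with hBdef
  set D1 := (B.filter (fun y => ¬ (y.1 = u.1))).image (fun y => s(u, y)) with hD1def
  set D2 := (A.erase u).image (fun x => s(x, v0)) with hD2def
  have huA : u ∈ A := by simp [hAdef, hA]
  -- membership property
  have hmem : ∀ f ∈ D1 ∪ D2, f ∈ G.edgeSet ∧ ∃ a b : Σ i : Fin k, Fin (n i),
      f = s(a, b) ∧ ¬ T'.Reachable a b := by
    intro f hf
    rcases Finset.mem_union.mp hf with hf | hf
    · obtain ⟨y, hy, rfl⟩ := Finset.mem_image.mp hf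
      rw [Finset.mem_filter] at hy
      have hyR : T'.Reachable v0 y := (Finset.mem_filter.mp hy.1).2
      have hy1 : ¬ (y.1 = u.1) := hy.2
      refine ⟨?_, u, y, rfl, ?_⟩
      · rw [SimpleGraph.mem_edgeSet, hG, myAdjIff]
        exact fun h => hy1 h.symm
      · intro h
        exact hA (hyR.trans h.symm)
    · obtain ⟨x, hx, rfl⟩ := Finset.mem_image.mp hf
      have hxu : x ≠ u := (Finset.mem_erase.mp hx).1
      have hxA : ¬ T'.Reachable v0 x :=
        (Finset.mem_filter.mp ((Finset.mem_erase.mp hx).2)).2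
      have hxv0 : x ≠ v0 := by
        intro h
        apply hxA
        rw [h]
      have hx1 : x.1 ≠ v0.1 := fun h => hxv0 (hs x h)
      refine ⟨?_, x, v0, rfl, ?_⟩
      · rw [SimpleGraph.mem_edgeSet, hG, myAdjIff]
        exact hx1
      · intro h
        exact hxA h.symm
  -- cardinalities
  have hABcard : B.card + A.card = Fintype.card (Σ i : Fin k, Fin (n i)) := by
    rw [hAdef, hBdef, Finset.card_filter_add_card_filter_not, Finset.card_univ]
  have hBsplit : (B.filter (fun y => y.1 = u.1)).card
      + (B.filter (fun y => ¬ (y.1 = u.1))).card = B.card :=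
    Finset.card_filter_add_card_filter_not _
  have hBj : (B.filter (fun y => y.1 = u.1)).card + 1 ≤ n u.1 := by
    have hsub : B.filter (fun y => y.1 = u.1)
        ⊆ (Finset.univ.filter (fun z : Σ i : Fin k, Fin (n i) => z.1 = u.1)).erase u := by
      intro z hz
      rw [Finset.mem_filter] at hz
      have hzB : T'.Reachable v0 z := (Finset.mem_filter.mp hz.1).2
      have hzu : z ≠ u := fun h => hA (h ▸ hzB)
      exact Finset.mem_erase.mpr ⟨hzu, Finset.mem_filter.mpr ⟨Finset.mem_univ _, hz.2⟩⟩
    have h1 := Finset.card_le_card hsub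
    have h2 : u ∈ Finset.univ.filter (fun z : Σ i : Fin k, Fin (n i) => z.1 = u.1) :=
      Finset.mem_filter.mpr ⟨Finset.mem_univ _, rfl⟩
    rw [Finset.card_erase_of_mem h2, myFilterPartCard] at h1
    have h3 : 1 ≤ (Finset.univ.filter
        (fun z : Σ i : Fin k, Fin (n i) => z.1 = u.1)).card := Finset.card_pos.mpr ⟨u, h2⟩
    rw [myFilterPartCard] at h3
    omega
  have hD1card : D1.card = (B.filter (fun y => ¬ (y.1 = u.1))).card := by
    rw [hD1def]
    apply Finset.card_image_of_injective
    intro y y' h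
    rwa [Sym2.congr_right] at h
  have hD2card : D2.card = A.card - 1 := by
    rw [hD2def]
    rw [Finset.card_image_of_injective _ (fun x x' h => by rwa [Sym2.congr_left] at h)]
    rw [Finset.card_erase_of_mem huA]
  have hdisj : Disjoint D1 D2 := by
    rw [Finset.disjoint_left]
    rintro f hf1 hf2
    obtain ⟨y, hy, rfl⟩ := Finset.mem_image.mp hf1
    obtain ⟨x, hx, hEq⟩ := Finset.mem_image.mp hf2
    rw [Sym2.eq_iff] at hEq
    rcases hEq with ⟨h1, h2⟩ | ⟨h1, h2⟩
    · exact (Finset.mem_erase.mp hx).1 h1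
    · exact hu h2.symm
  have hAcard : 1 ≤ A.card := Finset.card_pos.mpr ⟨u, huA⟩
  have hcard : Fintype.card (Σ i : Fin k, Fin (n i)) - n u.1 ≤ (D1 ∪ D2).card := by
    rw [Finset.card_union_of_disjoint hdisj, hD1card, hD2card]
    omega
  calc ((Fintype.card (Σ i : Fin k, Fin (n i)) - n u.1 : ℕ) : ℝ)
      ≤ ((D1 ∪ D2).card : ℝ) := Nat.cast_le.mpr hcard
    _ ≤ _ := myCardLeCong _ _ _ _ hmem

lemma myCongStar (v0 : Σ i : Fin k, Fin (n i))
    (u : Σ i : Fin k, Fin (n i)) (hu : u ≠ v0) :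
    edgeCongestion (SimpleGraph.completeMultipartiteGraph (fun i : Fin k => Fin (n i)))
        (_root_.starGraph v0) (fun _ => 1) (s(v0, u))
      = ((Fintype.card (Σ i : Fin k, Fin (n i)) - n u.1 : ℕ) : ℝ) := by
  classical
  set G := SimpleGraph.completeMultipartiteGraph (fun i : Fin k => Fin (n i)) with hG
  set D := (Finset.univ.filter (fun y : Σ i : Fin k, Fin (n i) => ¬ (y.1 = u.1))).image
    (fun y => s(u, y)) with hDdef
  have hiff : ∀ f : Sym2 (Σ i : Fin k, Fin (n i)),
      (f ∈ G.edgeSet ∧ ∃ a b, f = s(a, b) ∧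
        ¬ ((_root_.starGraph v0).deleteEdges {s(v0, u)}).Reachable a b) ↔ f ∈ D := by
    intro f
    constructor
    · rintro ⟨hfE, a, b, rfl, hnr⟩
      rw [SimpleGraph.mem_edgeSet, hG, myAdjIff] at hfE
      have hreach : ∀ x : Σ i : Fin k, Fin (n i), x ≠ u →
          ((_root_.starGraph v0).deleteEdges {s(v0, u)}).Reachable x v0 := by
        intro x hx
        by_cases hxv : x = v0
        · subst hxv; exact SimpleGraph.Reachable.refl _
        · apply SimpleGraph.Adj.reachable
          rw [SimpleGraph.deleteEdges_adj]
          refine ⟨⟨hxv, Or.inr rfl⟩, ?_⟩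
          intro hmem
          rw [Set.mem_singleton_iff, Sym2.eq_iff] at hmem
          rcases hmem with ⟨h1, h2⟩ | ⟨h1, h2⟩
          · exact hxv h1
          · exact hx h1
      have hor : a = u ∨ b = u := by
        by_contra hcon
        push_neg at hcon
        exact hnr ((hreach a hcon.1).trans (hreach b hcon.2).symm)
      rcases hor with rfl | rfl
      · exact Finset.mem_image.mpr ⟨b, Finset.mem_filter.mpr
          ⟨Finset.mem_univ _, fun h => hfE h.symm⟩, rfl⟩
      · exact Finset.mem_image.mpr ⟨a, Finset.mem_filter.mpr
          ⟨Finset.mem_univ _, fun h => hfE h⟩, Sym2.eq_swap⟩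
    · intro hf
      obtain ⟨y, hy, rfl⟩ := Finset.mem_image.mp hf
      have hy1 : ¬ (y.1 = u.1) := (Finset.mem_filter.mp hy).2
      refine ⟨?_, u, y, rfl, ?_⟩
      · rw [SimpleGraph.mem_edgeSet, hG, myAdjIff]
        exact fun h => hy1 h.symm
      · exact myNotReachOfIso (fun h => hy1 (congrArg Sigma.fst h.symm))
          (myStarIso v0 u hu)
  rw [myCongEqCard _ _ _ D hiff, hDdef]
  rw [Finset.card_image_of_injective _ (fun y y' h => by rwa [Sym2.congr_right] at h)]
  have h1 := Finset.card_filter_add_card_filter_not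
    (s := (Finset.univ : Finset (Σ i : Fin k, Fin (n i))))
    (p := fun z : Σ i : Fin k, Fin (n i) => z.1 = u.1)
  rw [myFilterPartCard, Finset.card_univ] at h1
  have h2 : n u.1 ≤ Fintype.card (Σ i : Fin k, Fin (n i)) := by omega
  congr 1
  omega

lemma myStarFilter (v0 : Σ i : Fin k, Fin (n i)) :
    (Finset.univ.filter (fun f : Sym2 (Σ i : Fin k, Fin (n i)) =>
        f ∈ (_root_.starGraph v0).edgeSet))
      = (Finset.univ.erase v0).image (fun u => s(v0, u)) := by
  ext f
  induction f with
  | _ a b =>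
    simp only [Finset.mem_filter, Finset.mem_univ, true_and, Finset.mem_image,
      Finset.mem_erase, SimpleGraph.mem_edgeSet]
    constructor
    · intro hab
      have hab' : a ≠ b ∧ (a = v0 ∨ b = v0) := hab
      rcases hab'.2 with rfl | rfl
      · exact ⟨b, ⟨fun h => hab'.1 h.symm, trivial⟩, rfl⟩
      · exact ⟨a, ⟨hab'.1, trivial⟩, Sym2.eq_swap⟩
    · rintro ⟨u, ⟨huv, _⟩, heq⟩
      rw [Sym2.eq_iff] at heq
      rcases heq with ⟨h1, h2⟩ | ⟨h1, h2⟩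
      · subst h1; subst h2
        exact ⟨fun h => huv h.symm, Or.inl rfl⟩
      · subst h1; subst h2
        exact ⟨huv, Or.inr rfl⟩

end Multi

/-- For `K_{n₁,…,n_{k−1},1}` with `n₁ ≥ … ≥ n_{k−1} ≥ n_k = 1` and `N = Σ nᵢ`, the radial
(star) spanning tree rooted at the vertex of the singleton part minimizes the `L^p`
congestion for every `p ≥ 1`, and
`C_p = (Σ_{i<k} nᵢ (N − nᵢ)^p)^(1/p)` (sum over the non-singleton parts). -/
theorem completeMultipartite_cong (k : ℕ) (hk : 0 < k) (n : Fin k → ℕ)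
    (hpos : ∀ i, 0 < n i) (hmono : Antitone n)
    (hlast : n ⟨k - 1, Nat.sub_lt hk Nat.one_pos⟩ = 1)
    (v0 : Σ i : Fin k, Fin (n i))
    (hv0 : v0.1 = ⟨k - 1, Nat.sub_lt hk Nat.one_pos⟩)
    (p : ℕ) (hp : 1 ≤ p) :
    (IsSpanningTree (SimpleGraph.completeMultipartiteGraph (fun i : Fin k => Fin (n i)))
        (starGraph v0) ∧
      ∀ T : SimpleGraph (Σ i : Fin k, Fin (n i)),
        IsSpanningTree (SimpleGraph.completeMultipartiteGraph (fun i : Fin k => Fin (n i))) T →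
          treeCong (SimpleGraph.completeMultipartiteGraph (fun i : Fin k => Fin (n i)))
              (starGraph v0) (fun _ => (1 : ℝ)) p
            ≤ treeCong (SimpleGraph.completeMultipartiteGraph (fun i : Fin k => Fin (n i)))
              T (fun _ => (1 : ℝ)) p) ∧
    graphCong (SimpleGraph.completeMultipartiteGraph (fun i : Fin k => Fin (n i)))
        (fun _ => (1 : ℝ)) p
      = (∑ i ∈ Finset.univ.erase ⟨k - 1, Nat.sub_lt hk Nat.one_pos⟩,
          (n i : ℝ) * (((∑ j, n j : ℕ) : ℝ) - (n i : ℝ)) ^ p) ^ ((1 : ℝ) / p) := by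
  classical
  have hn1 : n v0.1 = 1 := by rw [hv0]; exact hlast
  have hs : ∀ x : Σ i : Fin k, Fin (n i), x.1 = v0.1 → x = v0 :=
    fun x h => mySigmaEq x v0 h hn1
  set G := SimpleGraph.completeMultipartiteGraph (fun i : Fin k => Fin (n i)) with hG
  -- the star is a spanning tree
  have hspan : IsSpanningTree G (starGraph v0) := by
    refine ⟨?_, myStarTree v0⟩
    intro a b hab
    have hab' : a ≠ b ∧ (a = v0 ∨ b = v0) := hab
    rw [hG, myAdjIff]
    rcases hab'.2 with h | h
    · subst h
      intro hfst
      exact hab'.1 ((hs b hfst.symm).symm)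
    · subst h
      intro hfst
      exact hab'.1 (hs a hfst)
  have hNcard : Fintype.card (Σ i : Fin k, Fin (n i)) = ∑ j, n j := by simp
  -- the inner sum for the star tree
  have hSB : (∑ e : Sym2 (Σ i : Fin k, Fin (n i)),
      if e ∈ (starGraph v0).edgeSet then
        (edgeCongestion G (starGraph v0) (fun _ => (1:ℝ)) e) ^ p else 0)
      = ∑ u ∈ Finset.univ.erase v0,
          ((Fintype.card (Σ i : Fin k, Fin (n i)) - n u.1 : ℕ) : ℝ) ^ p := by
    rw [← Finset.sum_filter, myStarFilter v0,
      Finset.sum_image (fun u _ u' _ h => by rwa [Sym2.congr_right] at h)]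
    refine Finset.sum_congr rfl fun u hu => ?_
    rw [myCongStar v0 u (Finset.mem_erase.mp hu).1]
  -- rewrite the star sum in the target form
  have hsum2 : (∑ u ∈ Finset.univ.erase v0,
        ((Fintype.card (Σ i : Fin k, Fin (n i)) - n u.1 : ℕ) : ℝ) ^ p)
      = ∑ i ∈ Finset.univ.erase ⟨k - 1, Nat.sub_lt hk Nat.one_pos⟩,
          (n i : ℝ) * (((∑ j, n j : ℕ) : ℝ) - (n i : ℝ)) ^ p := by
    have hle : ∀ i : Fin k, n i ≤ ∑ j, n j :=
      fun i => Finset.single_le_sum (fun _ _ => Nat.zero_le _) (Finset.mem_univ i)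
    have hcast : ∀ i : Fin k,
        ((Fintype.card (Σ i : Fin k, Fin (n i)) - n i : ℕ) : ℝ)
          = ((∑ j, n j : ℕ) : ℝ) - (n i : ℝ) := by
      intro i; rw [hNcard, Nat.cast_sub (hle i)]
    set g : Fin k → ℝ := fun i => (((∑ j, n j : ℕ) : ℝ) - (n i : ℝ)) ^ p with hg
    have hL : (∑ u ∈ Finset.univ.erase v0,
        ((Fintype.card (Σ i : Fin k, Fin (n i)) - n u.1 : ℕ) : ℝ) ^ p)
        = ∑ u ∈ Finset.univ.erase v0, g u.1 := by
      refine Finset.sum_congr rfl fun u _ => ?_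
      rw [hg, hcast u.1]
    rw [hL]
    have h1 : (∑ u ∈ Finset.univ.erase v0, g u.1) + g v0.1
        = ∑ u : Σ i : Fin k, Fin (n i), g u.1 :=
      Finset.sum_erase_add _ _ (Finset.mem_univ v0)
    have h2 : (∑ u : Σ i : Fin k, Fin (n i), g u.1) = ∑ i : Fin k, (n i : ℝ) * g i := by
      rw [← Finset.univ_sigma_univ, Finset.sum_sigma]
      refine Finset.sum_congr rfl fun i _ => ?_
      show (∑ _t : Fin (n i), g i) = _
      rw [Finset.sum_const, Finset.card_univ, Fintype.card_fin, nsmul_eq_mul]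
    have h3 : (∑ i ∈ Finset.univ.erase ⟨k - 1, Nat.sub_lt hk Nat.one_pos⟩,
          (n i : ℝ) * g i) + (n ⟨k - 1, Nat.sub_lt hk Nat.one_pos⟩ : ℝ)
            * g ⟨k - 1, Nat.sub_lt hk Nat.one_pos⟩
        = ∑ i : Fin k, (n i : ℝ) * g i :=
      Finset.sum_erase_add _ _ (Finset.mem_univ _)
    have h4 : (n ⟨k - 1, Nat.sub_lt hk Nat.one_pos⟩ : ℝ)
        * g ⟨k - 1, Nat.sub_lt hk Nat.one_pos⟩ = g v0.1 := by
      rw [hlast, hv0]; norm_num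
    linarith [h1, h2, h3, h4]
  -- part 2 : the star minimizes the congestion
  have hpart2 : ∀ T : SimpleGraph (Σ i : Fin k, Fin (n i)), IsSpanningTree G T →
      treeCong G (starGraph v0) (fun _ => (1:ℝ)) p ≤ treeCong G T (fun _ => (1:ℝ)) p := by
    intro T hT
    unfold treeCong
    have hnn1 : (0:ℝ) ≤ ∑ e : Sym2 (Σ i : Fin k, Fin (n i)),
        if e ∈ (starGraph v0).edgeSet then
          (edgeCongestion G (starGraph v0) (fun _ => (1:ℝ)) e) ^ p else 0 := by
      refine Finset.sum_nonneg fun e _ => ?_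
      split_ifs
      · exact pow_nonneg (myCongNonneg _ _ _) p
      · exact le_refl 0
    refine Real.rpow_le_rpow hnn1 ?_ (by positivity)
    rw [hSB]
    have hex : ∀ u : Σ i : Fin k, Fin (n i), ∃ w, u ≠ v0 →
        T.Adj u w ∧ T.dist v0 w < T.dist v0 u ∧
          ¬ (T.deleteEdges {s(u, w)}).Reachable v0 u := by
      intro u
      by_cases h : u = v0
      · exact ⟨v0, fun hc => absurd h hc⟩
      · obtain ⟨w, hw⟩ := myExistsParent hT.2 h
        exact ⟨w, fun _ => hw⟩
    choose pa hpa using hex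
    have hinj : ∀ u ∈ Finset.univ.erase v0, ∀ u' ∈ Finset.univ.erase v0,
        s(u, pa u) = s(u', pa u') → u = u' := by
      intro u hu u' hu' h
      rw [Sym2.eq_iff] at h
      rcases h with ⟨h1, h2⟩ | ⟨h1, h2⟩
      · exact h1
      · exfalso
        have hu1 := (Finset.mem_erase.mp hu).1
        have hu'1 := (Finset.mem_erase.mp hu').1
        have d1 := (hpa u hu1).2.1
        have d2 := (hpa u' hu'1).2.1
        rw [h2] at d1
        rw [← h1] at d2
        omega
    calc ∑ u ∈ Finset.univ.erase v0,
          ((Fintype.card (Σ i : Fin k, Fin (n i)) - n u.1 : ℕ) : ℝ) ^ p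
        ≤ ∑ u ∈ Finset.univ.erase v0,
            (edgeCongestion G T (fun _ => (1:ℝ)) (s(u, pa u))) ^ p := by
          refine Finset.sum_le_sum fun u hu => ?_
          have hu' := (Finset.mem_erase.mp hu).1
          exact pow_le_pow_left₀ (Nat.cast_nonneg _)
            (myCongLower v0 hs T _ u hu' ((hpa u hu').2.2)) p
      _ = ∑ e ∈ (Finset.univ.erase v0).image (fun u => s(u, pa u)),
            (edgeCongestion G T (fun _ => (1:ℝ)) e) ^ p :=
          (Finset.sum_image (f := fun e => (edgeCongestion G T (fun _ => (1:ℝ)) e) ^ p) hinj).symm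
      _ ≤ ∑ e ∈ Finset.univ.filter (fun e => e ∈ T.edgeSet),
            (edgeCongestion G T (fun _ => (1:ℝ)) e) ^ p := by
          refine Finset.sum_le_sum_of_subset_of_nonneg ?_
            (fun e _ _ => pow_nonneg (myCongNonneg _ _ _) p)
          intro e he
          obtain ⟨u, hu, rfl⟩ := Finset.mem_image.mp he
          exact Finset.mem_filter.mpr ⟨Finset.mem_univ _,
            (SimpleGraph.mem_edgeSet T).mpr ((hpa u (Finset.mem_erase.mp hu).1).1)⟩
      _ = _ := Finset.sum_filter _ _
  -- the value of the star tree congestion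
  have hstarval : treeCong G (starGraph v0) (fun _ => (1:ℝ)) p
      = (∑ i ∈ Finset.univ.erase ⟨k - 1, Nat.sub_lt hk Nat.one_pos⟩,
          (n i : ℝ) * (((∑ j, n j : ℕ) : ℝ) - (n i : ℝ)) ^ p) ^ ((1 : ℝ) / p) := by
    unfold treeCong
    rw [hSB, hsum2]
  refine ⟨⟨hspan, hpart2⟩, ?_⟩
  unfold graphCong
  have hlb : ∀ x ∈ {x | ∃ T : SimpleGraph (Σ i : Fin k, Fin (n i)),
      IsSpanningTree G T ∧ treeCong G T (fun _ => (1:ℝ)) p = x},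
      (∑ i ∈ Finset.univ.erase ⟨k - 1, Nat.sub_lt hk Nat.one_pos⟩,
          (n i : ℝ) * (((∑ j, n j : ℕ) : ℝ) - (n i : ℝ)) ^ p) ^ ((1 : ℝ) / p) ≤ x := by
    rintro x ⟨T, hT, rfl⟩
    calc _ = treeCong G (starGraph v0) (fun _ => (1:ℝ)) p := hstarval.symm
      _ ≤ _ := hpart2 T hT
  have hmem : (∑ i ∈ Finset.univ.erase ⟨k - 1, Nat.sub_lt hk Nat.one_pos⟩,
      (n i : ℝ) * (((∑ j, n j : ℕ) : ℝ) - (n i : ℝ)) ^ p) ^ ((1 : ℝ) / p)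
      ∈ {x | ∃ T : SimpleGraph (Σ i : Fin k, Fin (n i)),
        IsSpanningTree G T ∧ treeCong G T (fun _ => (1:ℝ)) p = x} :=
    ⟨starGraph v0, hspan, hstarval⟩
  exact le_antisymm (csInf_le ⟨_, hlb⟩ hmem) (le_csInf ⟨_, hmem⟩ hlb)
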